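/- Let K be algebraically closed, and let N be a p×q matrix over K[X_1,...,X_n] (n = q-p+1) of the block form [D | A] where D is p×p diagonal with diagonal entries λ_{1,1},...,λ_{p,p} and A has entries λ_{i,j} for j > p. Then a point x lies in the vanishing set of all p-minors of N if and only if there is a nonempty subset i_1 < ... < i_κ of {1,...,p} such that λ_{i_k,i_k}(x) = 0 for k=1,...,κ, λ_{i,i}(x) ≠ 0 for i outside this set, and the κ×(q-p) submatrix of A on rows i_1,...,i_κ has rank less than κ at x. -/

import Mathlib

open MvPolynomial

open Matrix Module Submodule

/-- rank < number of rows iff rows are dependent -/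
lemma auxRankLt {K : Type*} [Field K] {ι : Type*} [Fintype ι] {s : ℕ}
    (B : Matrix ι (Fin s) K) :
    B.rank < Fintype.card ι ↔ ¬ LinearIndependent K (fun i => B i) := by
  have hBB : (fun i => B i) = B := rfl
  rw [linearIndependent_iff_card_eq_finrank_span, hBB]
  have hle := B.rank_le_card_height
  rw [B.rank_eq_finrank_span_row] at hle ⊢
  rw [show Set.range B.row = Set.range B from rfl] at hle ⊢
  unfold Set.finrank
  omega

/-- all p-minors vanish iff rows are dependent -/
lemma auxMinors {K : Type*} [Field K] {p q : ℕ} (M : Matrix (Fin p) (Fin q) K) :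
    (∀ c : Fin p ↪ Fin q, (M.submatrix id c).det = 0) ↔
      ¬ LinearIndependent K (fun i => M i) := by
  rw [← not_iff_not, not_not, not_forall]
  constructor
  · rintro ⟨c, hc⟩
    have hu : IsUnit (M.submatrix id c) :=
      (Matrix.isUnit_iff_isUnit_det _).2 (isUnit_iff_ne_zero.2 hc)
    have h1 : LinearIndependent K (fun i => (M.submatrix id c) i) :=
      Matrix.linearIndependent_rows_iff_isUnit.2 hu
    have h2 : LinearIndependent K (fun i => (LinearMap.funLeft K K c) (M i)) := h1
    exact h2.of_comp _
  · intro h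
    have hrank : Mᵀ.rank = p := by
      rw [Matrix.rank_transpose, h.rank_matrix, Fintype.card_fin]
    rw [Matrix.rank_eq_finrank_span_row] at hrank
    have htop : span K (Set.range Mᵀ) = ⊤ := by
      apply Submodule.eq_top_of_finrank_eq
      rw [show Set.range Mᵀ = Set.range Mᵀ.row from rfl, hrank, Module.finrank_fin_fun]
    obtain ⟨b, hb_sub, hb_span, hb_li⟩ := exists_linearIndependent K (Set.range Mᵀ)
    have hb_fin : b.Finite := (Set.finite_range Mᵀ).subset hb_sub
    haveI := hb_fin.fintype
    have hcard : Fintype.card b = p := by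
      have h1 := finrank_span_set_eq_card hb_li
      rw [hb_span, htop, finrank_top, Module.finrank_fin_fun, Set.toFinset_card] at h1
      omega
    choose φ hφ using fun (v : b) => hb_sub v.2
    have hφinj : Function.Injective φ := by
      intro a b h
      apply Subtype.ext
      rw [← hφ a, ← hφ b, h]
    let e : Fin p ≃ b := (Fintype.equivFinOfCardEq hcard).symm
    refine ⟨⟨φ ∘ e, hφinj.comp e.injective⟩, ?_⟩
    have hcols : LinearIndependent K (fun k : Fin p => (M.submatrix id (φ ∘ e))ᵀ k) := by
      have heq : (fun k : Fin p => (M.submatrix id (φ ∘ e))ᵀ k)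
          = (fun v : b => (v : Fin p → K)) ∘ e := by
        funext k
        have := hφ (e k)
        funext i
        simpa [Matrix.transpose_apply, Matrix.submatrix_apply] using congrFun this i
      rw [heq]
      exact hb_li.comp e e.injective
    have hu : IsUnit (M.submatrix id (φ ∘ e)) :=
      Matrix.linearIndependent_cols_iff_isUnit.1 hcols
    exact isUnit_iff_ne_zero.1 ((Matrix.isUnit_iff_isUnit_det _).1 hu)


/-- Rank-deficiency characterization for block matrices `N = [D | A]`: let `K` be
algebraically closed and `N` a `p×q` polynomial matrix in `n = q - p + 1`
variables whose first `p` columns are diagonal (off-diagonal entries zero).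
A point `x` is a common zero of all `p`-minors of `N` if and only if there is a
nonempty set `I ⊆ {1,…,p}` such that the diagonal entries indexed by `I` vanish
at `x`, the other diagonal entries do not, and the submatrix of the last `q - p`
columns on the rows of `I` has rank `< |I|` at `x`. -/
theorem stmt17 (K : Type*) [Field K] [IsAlgClosed K]
    (p q n : ℕ) (hpq : p ≤ q) (hn : n = q - p + 1)
    (N : Matrix (Fin p) (Fin q) (MvPolynomial (Fin n) K))
    (hdiag : ∀ i j : Fin p, i ≠ j → N i (Fin.castLE hpq j) = 0)
    (x : Fin n → K) :
    (∀ c : Fin p ↪ Fin q, ((N.map (MvPolynomial.eval x)).submatrix id c).det = 0) ↔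
      ∃ I : Finset (Fin p), I.Nonempty ∧
        (∀ i ∈ I, MvPolynomial.eval x (N i (Fin.castLE hpq i)) = 0) ∧
        (∀ i ∉ I, MvPolynomial.eval x (N i (Fin.castLE hpq i)) ≠ 0) ∧
        (Matrix.of fun (i : ↥I) (j : Fin (q - p)) =>
            MvPolynomial.eval x
              (N i.val (Fin.cast (by omega) (Fin.natAdd p j)))).rank < I.card := by
  classical
  set M : Matrix (Fin p) (Fin q) K := N.map (MvPolynomial.eval x) with hM
  have hqp : p + (q - p) = q := by omega
  set colR : Fin (q - p) → Fin q := fun j => Fin.cast hqp (Fin.natAdd p j) with hcolR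
  have hMdiag : ∀ i j : Fin p, i ≠ j → M i (Fin.castLE hpq j) = 0 := by
    intro i j hij
    simp [hM, Matrix.map_apply, hdiag i j hij]
  set I₀ : Finset (Fin p) := Finset.univ.filter (fun i => M i (Fin.castLE hpq i) = 0) with hI₀
  have hmemI₀ : ∀ i, i ∈ I₀ ↔ M i (Fin.castLE hpq i) = 0 := by
    intro i; simp [hI₀]
  have hcolcases : ∀ c : Fin q, (∃ j : Fin p, c = Fin.castLE hpq j) ∨
      (∃ j : Fin (q - p), c = colR j) := by
    intro c
    by_cases hc : (c : ℕ) < p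
    · exact Or.inl ⟨⟨c, hc⟩, by ext; simp⟩
    · refine Or.inr ⟨⟨(c : ℕ) - p, by omega⟩, ?_⟩
      ext
      simp only [hcolR, Fin.coe_cast, Fin.coe_natAdd]
      omega
  rw [auxMinors M]
  have key : ¬ LinearIndependent K (fun i => M i) ↔
      (I₀.Nonempty ∧ ¬ LinearIndependent K
        (fun i : ↥I₀ => fun j : Fin (q - p) => M i (colR j))) := by
    constructor
    · intro h
      obtain ⟨g, hsum, i₀, hgi₀⟩ := Fintype.not_linearIndependent_iff.1 h
      have hzero : ∀ i, i ∉ I₀ → g i = 0 := by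
        intro i hi
        have h1 := congrFun hsum (Fin.castLE hpq i)
        simp only [Finset.sum_apply, Pi.smul_apply, smul_eq_mul, Pi.zero_apply] at h1
        rw [Finset.sum_eq_single i] at h1
        · have h2 : M i (Fin.castLE hpq i) ≠ 0 := fun h3 => hi ((hmemI₀ i).2 h3)
          exact (mul_eq_zero.1 h1).resolve_right h2
        · intro k _ hk; rw [hMdiag k i hk, mul_zero]
        · intro hk; exact absurd (Finset.mem_univ i) hk
      have hi₀ : i₀ ∈ I₀ := by
        by_contra hc; exact hgi₀ (hzero i₀ hc)
      refine ⟨⟨i₀, hi₀⟩, ?_⟩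
      apply Fintype.not_linearIndependent_iff.2
      refine ⟨fun i => g i, ?_, ⟨i₀, hi₀⟩, hgi₀⟩
      funext j
      simp only [Finset.sum_apply, Pi.smul_apply, smul_eq_mul, Pi.zero_apply]
      have h1 := congrFun hsum (colR j)
      simp only [Finset.sum_apply, Pi.smul_apply, smul_eq_mul, Pi.zero_apply] at h1
      calc ∑ i : ↥I₀, g ↑i * M ↑i (colR j)
          = ∑ i ∈ I₀, g i * M i (colR j) :=
            Finset.sum_coe_sort I₀ (fun i => g i * M i (colR j))
        _ = ∑ i : Fin p, g i * M i (colR j) := by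
            apply Finset.sum_subset (Finset.subset_univ I₀)
            intro i _ hi
            rw [hzero i hi, zero_mul]
        _ = 0 := h1
    · rintro ⟨hne, h⟩
      obtain ⟨g, hsum, i₀, hgi₀⟩ := Fintype.not_linearIndependent_iff.1 h
      apply Fintype.not_linearIndependent_iff.2
      refine ⟨fun i => if h : i ∈ I₀ then g ⟨i, h⟩ else 0, ?_, i₀, ?_⟩
      · funext c
        simp only [Finset.sum_apply, Pi.smul_apply, smul_eq_mul, Pi.zero_apply]
        rcases hcolcases c with ⟨j, rfl⟩ | ⟨j, rfl⟩
        · rw [Finset.sum_eq_single j]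
          · by_cases hj : j ∈ I₀
            · rw [(hmemI₀ j).1 hj, mul_zero]
            · simp [hj]
          · intro k _ hk; rw [hMdiag k j hk, mul_zero]
          · intro hk; exact absurd (Finset.mem_univ j) hk
        · have h1 := congrFun hsum j
          simp only [Finset.sum_apply, Pi.smul_apply, smul_eq_mul, Pi.zero_apply] at h1
          calc ∑ i : Fin p, (if h : i ∈ I₀ then g ⟨i, h⟩ else 0) * M i (colR j)
              = ∑ i ∈ I₀, (if h : i ∈ I₀ then g ⟨i, h⟩ else 0) * M i (colR j) := by
                symm
                apply Finset.sum_subset (Finset.subset_univ I₀)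
                intro i _ hi
                rw [dif_neg hi, zero_mul]
            _ = ∑ i : ↥I₀, (if h : (i : Fin p) ∈ I₀ then g ⟨i, h⟩ else 0) * M ↑i (colR j) :=
                (Finset.sum_coe_sort I₀
                  (fun i => (if h : i ∈ I₀ then g ⟨i, h⟩ else 0) * M i (colR j))).symm
            _ = ∑ i : ↥I₀, g i * M ↑i (colR j) := by
                apply Finset.sum_congr rfl
                intro i _
                rw [dif_pos i.2, Subtype.coe_eta]
            _ = 0 := h1
      · show (if h : (i₀ : Fin p) ∈ I₀ then g ⟨i₀, h⟩ else 0) ≠ 0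
        rw [dif_pos i₀.2, Subtype.coe_eta]
        exact hgi₀
  rw [key]
  constructor
  · rintro ⟨hne, hdep⟩
    refine ⟨I₀, hne, fun i hi => (hmemI₀ i).1 hi, fun i hi h => hi ((hmemI₀ i).2 h), ?_⟩
    have h2 := (auxRankLt (Matrix.of fun (i : ↥I₀) (j : Fin (q - p)) => M ↑i (colR j))).2 hdep
    rw [Fintype.card_coe] at h2
    exact h2
  · rintro ⟨I, hne, h0, hnz, hrank⟩
    have hII : I = I₀ := by
      apply Finset.ext
      intro i
      rw [hmemI₀]
      constructor
      · exact h0 i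
      · intro h
        by_contra hc
        exact hnz i hc h
    rw [hII] at hne hrank
    refine ⟨hne, (auxRankLt (Matrix.of fun (i : ↥I₀) (j : Fin (q - p)) => M ↑i (colR j))).1 ?_⟩
    rw [Fintype.card_coe]
    exact hrank
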